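/- Let ‖·‖ be an arbitrary norm on M_n(ℂ). Define ‖A‖_(u) := sup{∑ᵢ ‖CᵢACᵢ*‖ : ∑ᵢ Cᵢ*Cᵢ = I}. Then ‖·‖_(u) is an L-norm, ‖·‖ ≤ ‖·‖_(u), and ‖·‖_(u) is the minimum element of the class of L-norms greater than or equal to ‖·‖: for any L-norm ⦀·⦀ with ‖·‖ ≤ ⦀·⦀, one has ‖·‖_(u) ≤ ⦀·⦀. -/

import Mathlib

open Matrix BigOperators ComplexOrder

/-- Square complex matrices. -/
abbrev Mat (n : ℕ) := Matrix (Fin n) (Fin n) ℂ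

/-- `N` is a norm on `Mat n`. -/
def IsMatrixNorm {n : ℕ} (N : Mat n → ℝ) : Prop :=
  (∀ A, N A = 0 ↔ A = 0) ∧
  (∀ (c : ℂ) (A : Mat n), N (c • A) = ‖c‖ * N A) ∧
  (∀ A B : Mat n, N (A + B) ≤ N A + N B)

/-- A set of matrices is C*-convex. -/
def CStarConvex {n : ℕ} (K : Set (Mat n)) : Prop :=
  ∀ (k : ℕ) (C A : Fin k → Mat n), (∀ i, A i ∈ K) →
    (∑ i, (C i)ᴴ * C i = 1) → (∑ i, (C i)ᴴ * A i * C i) ∈ K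

/-- `N` is an M-norm. -/
def IsMNorm {n : ℕ} (N : Mat n → ℝ) : Prop :=
  ∀ (k : ℕ) (C X : Fin k → Mat n), (∑ i, (C i)ᴴ * C i = 1) →
    N (∑ i, (C i)ᴴ * X i * C i) ≤ ⨆ i, N (X i)

/-- `N` is an L-norm. -/
def IsLNorm {n : ℕ} (N : Mat n → ℝ) : Prop :=
  ∀ (k : ℕ) (C : Fin k → Mat n) (X : Mat n), (∑ i, (C i)ᴴ * C i = 1) →
    ∑ i, N (C i * X * (C i)ᴴ) ≤ N X

/-- The dual norm with respect to the pairing `⟨Y|X⟩ = Tr(Yᴴ X)`. -/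
noncomputable def dualNorm {n : ℕ} (N : Mat n → ℝ) (Y : Mat n) : ℝ :=
  sSup {r | ∃ X : Mat n, N X ≤ 1 ∧ r = ‖(Yᴴ * X).trace‖}

/-- The operator (spectral) norm of a matrix. -/
noncomputable def opNorm {n : ℕ} (A : Mat n) : ℝ :=
  ‖Matrix.toEuclideanCLM (𝕜 := ℂ) (n := Fin n) A‖

/-- The trace norm `‖A‖₁ = Tr((AᴴA)^{1/2})`. -/
noncomputable def traceNorm {n : ℕ} (A : Mat n) : ℝ :=
  ((Matrix.posSemidef_conjTranspose_mul_self A).isHermitian.eigenvectorUnitary.1 *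
    diagonal (((↑) : ℝ → ℂ) ∘ (Real.sqrt ∘ (Matrix.posSemidef_conjTranspose_mul_self A).isHermitian.eigenvalues)) *
    (star (Matrix.posSemidef_conjTranspose_mul_self A).isHermitian.eigenvectorUnitary : Mat n)).trace.re

/-- The numerical radius. -/
noncomputable def numRadius {n : ℕ} (A : Mat n) : ℝ :=
  sSup {r | ∃ x : EuclideanSpace ℂ (Fin n), ‖x‖ = 1 ∧
    r = ‖(inner ℂ x (Matrix.toEuclideanCLM (𝕜 := ℂ) (n := Fin n) A x))‖}

/-- The norm `‖A‖_(u) = sup {∑ᵢ ‖CᵢACᵢ*‖ : ∑ᵢ Cᵢ*Cᵢ = 1}`. -/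
noncomputable def uNorm {n : ℕ} (N : Mat n → ℝ) (A : Mat n) : ℝ :=
  sSup {r | ∃ (k : ℕ) (C : Fin k → Mat n), (∑ i, (C i)ᴴ * C i = 1) ∧
    r = ∑ i, N (C i * A * (C i)ᴴ)}

lemma N_zero {n : ℕ} {N : Mat n → ℝ} (hN : IsMatrixNorm N) : N 0 = 0 := (hN.1 0).mpr rfl

lemma N_nonneg {n : ℕ} {N : Mat n → ℝ} (hN : IsMatrixNorm N) (A : Mat n) : 0 ≤ N A := by
  have h1 : N ((-1 : ℂ) • A) = N A := by rw [hN.2.1]; simp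
  have h2 := hN.2.2 A ((-1 : ℂ) • A)
  simp only [h1] at h2
  have : A + (-1 : ℂ) • A = 0 := by simp
  rw [this, N_zero hN] at h2
  linarith

lemma N_sum_le {n : ℕ} {N : Mat n → ℝ} (hN : IsMatrixNorm N) {α : Type*} (s : Finset α)
    (f : α → Mat n) : N (∑ i ∈ s, f i) ≤ ∑ i ∈ s, N (f i) := by
  classical
  induction s using Finset.induction with
  | empty => simp [N_zero hN]
  | insert _ _ h ih =>
    rw [Finset.sum_insert h, Finset.sum_insert h]
    exact le_trans (hN.2.2 _ _) (by linarith)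

lemma N_entry_bound {n : ℕ} {N : Mat n → ℝ} (hN : IsMatrixNorm N) (M : Mat n) :
    N M ≤ ∑ j, ∑ l, ‖M j l‖ * N (Matrix.single j l 1) := by
  calc N M = N (∑ j, ∑ l, Matrix.single j l (M j l)) := by
        rw [← Matrix.matrix_eq_sum_single M]
    _ ≤ ∑ j, N (∑ l, Matrix.single j l (M j l)) := N_sum_le hN _ _
    _ ≤ ∑ j, ∑ l, N (Matrix.single j l (M j l)) :=
        Finset.sum_le_sum fun j _ => N_sum_le hN _ _
    _ = ∑ j, ∑ l, ‖M j l‖ * N (Matrix.single j l 1) := by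
        refine Finset.sum_congr rfl fun j _ => Finset.sum_congr rfl fun l _ => ?_
        rw [show Matrix.single j l (M j l) = (M j l) • Matrix.single j l 1 by
          rw [Matrix.smul_single]; simp, hN.2.1]

lemma col_sq_sum {n k : ℕ} {C : Fin k → Mat n} (hC : ∑ i, (C i)ᴴ * C i = 1) (p : Fin n) :
    ∑ i, ∑ m, (‖C i m p‖)^2 = 1 := by
  have h := congrArg (fun M : Mat n => M p p) hC
  simp only [Matrix.sum_apply, Matrix.mul_apply, Matrix.conjTranspose_apply,
    Matrix.one_apply_eq] at h
  have : ∀ i m, star (C i m p) * C i m p = ((‖C i m p‖)^2 : ℂ) := fun i m => by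
    rw [Complex.star_def, Complex.conj_mul']
  simp only [this] at h
  exact_mod_cast h

lemma col_sq_le {n k : ℕ} {C : Fin k → Mat n} (hC : ∑ i, (C i)ᴴ * C i = 1) (m : Fin n)
    (p : Fin n) : ∑ i, (‖C i m p‖)^2 ≤ 1 := by
  rw [← col_sq_sum hC p]
  refine Finset.sum_le_sum fun i _ => ?_
  exact Finset.single_le_sum (f := fun m' => (‖C i m' p‖)^2) (fun m' _ => sq_nonneg _) (Finset.mem_univ m)

lemma entry_sum_bound {n k : ℕ} {C : Fin k → Mat n} (hC : ∑ i, (C i)ᴴ * C i = 1)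
    (X : Mat n) (j l : Fin n) :
    ∑ i, ‖(C i * X * (C i)ᴴ) j l‖ ≤ ∑ p, ∑ q, ‖X p q‖ := by
  have habs : ∀ i, ‖(C i * X * (C i)ᴴ) j l‖ ≤
      ∑ p, ∑ q, ‖C i j p‖ * ‖X p q‖ * ‖C i l q‖ := by
    intro i
    rw [Matrix.mul_apply]
    refine le_trans (norm_sum_le _ _) ?_
    rw [Finset.sum_comm]
    refine Finset.sum_le_sum fun q _ => ?_
    rw [norm_mul, Matrix.mul_apply, Matrix.conjTranspose_apply]
    refine le_trans (mul_le_mul_of_nonneg_right (norm_sum_le _ _) (norm_nonneg _)) ?_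
    rw [Finset.sum_mul]
    refine Finset.sum_le_sum fun p _ => le_of_eq ?_
    rw [norm_mul, Complex.star_def, Complex.norm_conj]
  calc ∑ i, ‖(C i * X * (C i)ᴴ) j l‖
      ≤ ∑ i, ∑ p, ∑ q, ‖C i j p‖ * ‖X p q‖ * ‖C i l q‖ :=
        Finset.sum_le_sum fun i _ => habs i
    _ = ∑ p, ∑ q, ‖X p q‖ * ∑ i, ‖C i j p‖ * ‖C i l q‖ := by
        rw [Finset.sum_comm]
        refine Finset.sum_congr rfl fun p _ => ?_
        rw [Finset.sum_comm]
        refine Finset.sum_congr rfl fun q _ => ?_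
        rw [Finset.mul_sum]
        exact Finset.sum_congr rfl fun i _ => by ring
    _ ≤ ∑ p, ∑ q, ‖X p q‖ * 1 := by
        refine Finset.sum_le_sum fun p _ => Finset.sum_le_sum fun q _ => ?_
        refine mul_le_mul_of_nonneg_left ?_ (norm_nonneg _)
        calc ∑ i, ‖C i j p‖ * ‖C i l q‖
            ≤ ∑ i, ((‖C i j p‖)^2 + (‖C i l q‖)^2) / 2 :=
              Finset.sum_le_sum fun i _ => by nlinarith [sq_nonneg (‖C i j p‖ - ‖C i l q‖)]
          _ = ((∑ i, (‖C i j p‖)^2) + ∑ i, (‖C i l q‖)^2) / 2 := by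
              rw [← Finset.sum_add_distrib, Finset.sum_div]
          _ ≤ 1 := by
              have := col_sq_le hC j p
              have := col_sq_le hC l q
              linarith
    _ = ∑ p, ∑ q, ‖X p q‖ := by simp

lemma sum_N_le {n : ℕ} {N : Mat n → ℝ} (hN : IsMatrixNorm N) {k : ℕ} {C : Fin k → Mat n}
    (hC : ∑ i, (C i)ᴴ * C i = 1) (X : Mat n) :
    ∑ i, N (C i * X * (C i)ᴴ) ≤
      (∑ j, ∑ l, N (Matrix.single j l 1)) * ∑ p, ∑ q, ‖X p q‖ := by
  calc ∑ i, N (C i * X * (C i)ᴴ)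
      ≤ ∑ i, ∑ j, ∑ l, ‖(C i * X * (C i)ᴴ) j l‖ * N (Matrix.single j l 1) :=
        Finset.sum_le_sum fun i _ => N_entry_bound hN _
    _ = ∑ j, ∑ l, (∑ i, ‖(C i * X * (C i)ᴴ) j l‖) * N (Matrix.single j l 1) := by
        rw [Finset.sum_comm]
        refine Finset.sum_congr rfl fun j _ => ?_
        rw [Finset.sum_comm]
        exact Finset.sum_congr rfl fun l _ => by rw [Finset.sum_mul]
    _ ≤ ∑ j, ∑ l, (∑ p, ∑ q, ‖X p q‖) * N (Matrix.single j l 1) := by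
        refine Finset.sum_le_sum fun j _ => Finset.sum_le_sum fun l _ => ?_
        exact mul_le_mul_of_nonneg_right (entry_sum_bound hC X j l) (N_nonneg hN _)
    _ = (∑ j, ∑ l, N (Matrix.single j l 1)) * ∑ p, ∑ q, ‖X p q‖ := by
        rw [Finset.sum_mul]
        refine Finset.sum_congr rfl fun j _ => ?_
        rw [Finset.sum_mul]
        exact Finset.sum_congr rfl fun l _ => mul_comm _ _

lemma uSet_mem {n : ℕ} (N : Mat n → ℝ) (A : Mat n) :
    N A ∈ {r | ∃ (k : ℕ) (C : Fin k → Mat n), (∑ i, (C i)ᴴ * C i = 1) ∧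
      r = ∑ i, N (C i * A * (C i)ᴴ)} := by
  refine ⟨1, fun _ => 1, by simp, by simp⟩

lemma uSet_bdd {n : ℕ} {N : Mat n → ℝ} (hN : IsMatrixNorm N) (A : Mat n) :
    BddAbove {r | ∃ (k : ℕ) (C : Fin k → Mat n), (∑ i, (C i)ᴴ * C i = 1) ∧
      r = ∑ i, N (C i * A * (C i)ᴴ)} := by
  refine ⟨(∑ j, ∑ l, N (Matrix.single j l 1)) * ∑ p, ∑ q, ‖A p q‖, ?_⟩
  rintro r ⟨k, C, hC, rfl⟩
  exact sum_N_le hN hC A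

lemma N_le_uNorm {n : ℕ} {N : Mat n → ℝ} (hN : IsMatrixNorm N) (A : Mat n) :
    N A ≤ uNorm N A :=
  le_csSup (uSet_bdd hN A) (uSet_mem N A)

lemma uNorm_LNorm {n : ℕ} {N : Mat n → ℝ} (hN : IsMatrixNorm N) {k : ℕ}
    (C : Fin k → Mat n) (X : Mat n) (hC : ∑ i, (C i)ᴴ * C i = 1) :
    ∑ i, uNorm N (C i * X * (C i)ᴴ) ≤ uNorm N X := by
  refine le_of_forall_pos_le_add fun ε hε => ?_
  set ε' : ℝ := ε / (k + 1) with hε'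
  have hε'pos : 0 < ε' := by positivity
  have h : ∀ i : Fin k, ∃ (m : ℕ) (D : Fin m → Mat n), (∑ j, (D j)ᴴ * D j = 1) ∧
      uNorm N (C i * X * (C i)ᴴ) ≤ (∑ j, N (D j * (C i * X * (C i)ᴴ) * (D j)ᴴ)) + ε' := by
    intro i
    obtain ⟨r, ⟨m, D, hD, rfl⟩, hlt⟩ :=
      exists_lt_of_lt_csSup (⟨_, uSet_mem N (C i * X * (C i)ᴴ)⟩ : Set.Nonempty _)
        (show uNorm N (C i * X * (C i)ᴴ) - ε' < uNorm N (C i * X * (C i)ᴴ) from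
          sub_lt_self _ hε'pos)
    exact ⟨m, D, hD, by linarith⟩
  choose m D hD hle using h
  set e := (Fintype.equivFin ((i : Fin k) × Fin (m i))).symm with he
  set F : Fin (Fintype.card ((i : Fin k) × Fin (m i))) → Mat n :=
    fun a => D (e a).1 (e a).2 * C (e a).1 with hF
  have hcond : ∑ a, (F a)ᴴ * F a = 1 := by
    calc ∑ a, (F a)ᴴ * F a
        = ∑ s : (i : Fin k) × Fin (m i), (D s.1 s.2 * C s.1)ᴴ * (D s.1 s.2 * C s.1) :=
          Equiv.sum_comp e (fun s => (D s.1 s.2 * C s.1)ᴴ * (D s.1 s.2 * C s.1))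
      _ = ∑ i, ∑ j, (C i)ᴴ * ((D i j)ᴴ * D i j) * C i := by
          rw [← Finset.univ_sigma_univ, Finset.sum_sigma]
          exact Finset.sum_congr rfl fun i _ => Finset.sum_congr rfl fun j _ => by
            simp only [Matrix.conjTranspose_mul, mul_assoc]
      _ = ∑ i, (C i)ᴴ * C i := by
          refine Finset.sum_congr rfl fun i _ => ?_
          have : ∑ j, (C i)ᴴ * ((D i j)ᴴ * D i j) * C i
              = (C i)ᴴ * (∑ j, (D i j)ᴴ * D i j) * C i := by
            rw [Finset.mul_sum, Finset.sum_mul]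
          rw [this, hD i, mul_one]
      _ = 1 := hC
  have hval : ∑ a, N (F a * X * (F a)ᴴ)
      = ∑ i, ∑ j, N (D i j * (C i * X * (C i)ᴴ) * (D i j)ᴴ) := by
    calc ∑ a, N (F a * X * (F a)ᴴ)
        = ∑ s : (i : Fin k) × Fin (m i),
            N (D s.1 s.2 * C s.1 * X * (D s.1 s.2 * C s.1)ᴴ) :=
          Equiv.sum_comp e (fun s => N (D s.1 s.2 * C s.1 * X * (D s.1 s.2 * C s.1)ᴴ))
      _ = ∑ i, ∑ j, N (D i j * (C i * X * (C i)ᴴ) * (D i j)ᴴ) := by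
          rw [← Finset.univ_sigma_univ, Finset.sum_sigma]
          exact Finset.sum_congr rfl fun i _ => Finset.sum_congr rfl fun j _ => by
            exact congrArg N (by simp only [Matrix.conjTranspose_mul, mul_assoc])
  have hmem : (∑ i, ∑ j, N (D i j * (C i * X * (C i)ᴴ) * (D i j)ᴴ)) ≤ uNorm N X :=
    le_csSup (uSet_bdd hN X) ⟨_, F, hcond, hval.symm⟩
  have hkpos : (0:ℝ) < (k:ℝ) + 1 := by positivity
  have h1 : (k:ℝ) * ε' ≤ ε := by
    rw [hε', mul_div_assoc', div_le_iff₀ hkpos]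
    nlinarith [hε.le, Nat.cast_nonneg (α := ℝ) k]
  calc ∑ i, uNorm N (C i * X * (C i)ᴴ)
      ≤ ∑ i, ((∑ j, N (D i j * (C i * X * (C i)ᴴ) * (D i j)ᴴ)) + ε') :=
        Finset.sum_le_sum fun i _ => hle i
    _ = (∑ i, ∑ j, N (D i j * (C i * X * (C i)ᴴ) * (D i j)ᴴ)) + (k:ℝ) * ε' := by
        rw [Finset.sum_add_distrib, Finset.sum_const, Finset.card_univ, Fintype.card_fin,
          nsmul_eq_mul]
    _ ≤ uNorm N X + ε := by linarith

theorem uNorm_min_LNorm {n : ℕ} (N : Mat n → ℝ) (hN : IsMatrixNorm N) :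
    IsLNorm (uNorm N) ∧ (∀ A, N A ≤ uNorm N A) ∧
    ∀ N' : Mat n → ℝ, IsMatrixNorm N' → IsLNorm N' → (∀ A, N A ≤ N' A) →
      ∀ A, uNorm N A ≤ N' A := by
  refine ⟨fun k C X hC => uNorm_LNorm hN C X hC, fun A => N_le_uNorm hN A, ?_⟩
  intro N' hN' hL hle A
  refine csSup_le ⟨_, uSet_mem N A⟩ ?_
  rintro r ⟨k, C, hC, rfl⟩
  calc ∑ i, N (C i * A * (C i)ᴴ) ≤ ∑ i, N' (C i * A * (C i)ᴴ) :=
      Finset.sum_le_sum fun i _ => hle _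
    _ ≤ N' A := hL k C A hC
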